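/- Let a be a regular ambiguity of elements of G^{[Σ]} and suppose there exist g1^{[β1]}, g2^{[β2]} ∈ G^{[Σ]} and a mixed monomial m ∈ M(A) such that sig(g2 m β1) ≄ sig(β2 m g1) and SIG(a) is reducible by max(sig(g2 m β1), −sig(β2 m g1)) (i.e., SIG(a) equals a term times this signature times a word). Then a is covered by the trivial syzygy g2 m β1 − β2 m g1, and S-Pol(a) can be discarded after adding this trivial syzygy to the set H. -/

import Mathlib

/-!  Signature Gröbner bases in the mixed algebra `R[x₁,…,x_k]⟨y₁,…,y_n⟩`
over a principal ideal domain `R`, following Hofstadler–Verron. -/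

open Finsupp

/-- A mixed monomial `v·w`, with `v` a commutative monomial in `x₁,…,x_k`
(recorded by its exponent vector) and `w` a word in the noncommutative
variables `y₁,…,y_n`. -/
@[ext]
structure MMon (k n : ℕ) where
  c : Fin k →₀ ℕ
  w : FreeMonoid (Fin n)

namespace MMon

instance (k n : ℕ) : One (MMon k n) := ⟨⟨0, 1⟩⟩
noncomputable instance (k n : ℕ) : Mul (MMon k n) := ⟨fun a b => ⟨a.c + b.c, a.w * b.w⟩⟩

@[simp] lemma mul_c {k n : ℕ} (a b : MMon k n) : (a * b).c = a.c + b.c := rfl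
@[simp] lemma mul_w {k n : ℕ} (a b : MMon k n) : (a * b).w = a.w * b.w := rfl
@[simp] lemma one_c {k n : ℕ} : (1 : MMon k n).c = 0 := rfl
@[simp] lemma one_w {k n : ℕ} : (1 : MMon k n).w = 1 := rfl

noncomputable instance (k n : ℕ) : Monoid (MMon k n) where
  mul_assoc a b c := by ext : 1 <;> simp [add_assoc, mul_assoc]
  one_mul a := by ext : 1 <;> simp
  mul_one a := by ext : 1 <;> simp

end MMon

/-- A module monomial `u·a·ε_i·b` of the free bimodule `Σ = (A ⊗_{R[X]} A)^r`. -/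
@[ext]
structure ModMon (k n r : ℕ) where
  u : Fin k →₀ ℕ
  a : FreeMonoid (Fin n)
  i : Fin r
  b : FreeMonoid (Fin n)

instance {k n r : ℕ} [NeZero r] : Inhabited (ModMon k n r) := ⟨⟨0, 1, default, 1⟩⟩

/-- The mixed algebra `A = R[x₁,…,x_k]⟨y₁,…,y_n⟩`, realised as the monoid
algebra of the monoid of mixed monomials. -/
abbrev MixedAlg (R : Type) [CommRing R] (k n : ℕ) : Type := MonoidAlgebra R (MMon k n)

/-- The free `A`-bimodule `Σ = (A ⊗_{R[X]} A)^r`, realised as the free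
`R`-module on the module monomials `u·a·ε_i·b`. -/
abbrev SigModule (R : Type) [CommRing R] (k n r : ℕ) : Type := ModMon k n r →₀ R

section Defs

variable {R : Type} [CommRing R] {k n r : ℕ}

/-- The term `c·m` of `A` (an element of `T(A)` when `c ≠ 0`). -/
noncomputable def trm (m : MMon k n) (c : R) : MixedAlg R k n := MonoidAlgebra.single m c

/-- The word `b ∈ ⟨Y⟩`, viewed as an element of `A`. -/
noncomputable def wrd (b : FreeMonoid (Fin n)) : MixedAlg R k n :=
  MonoidAlgebra.single ⟨0, b⟩ 1

/-- Multiplication `m·σ` of a module monomial by a mixed monomial on the left. -/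
noncomputable def mulL (m : MMon k n) (σ : ModMon k n r) : ModMon k n r :=
  ⟨m.c + σ.u, m.w * σ.a, σ.i, σ.b⟩

/-- Multiplication `σ·m` of a module monomial by a mixed monomial on the right. -/
noncomputable def mulR (σ : ModMon k n r) (m : MMon k n) : ModMon k n r :=
  ⟨σ.u + m.c, σ.a, σ.i, σ.b * m.w⟩

/-- The two-sided multiple `m·σ·b` of a module monomial by a mixed monomial `m`
on the left and a word `b` on the right. -/
noncomputable def mulLR (m : MMon k n) (σ : ModMon k n r) (b : FreeMonoid (Fin n)) : ModMon k n r :=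
  ⟨m.c + σ.u, m.w * σ.a, σ.i, σ.b * b⟩

/-- The left action of `A` on the bimodule `Σ`. -/
noncomputable def actL (f : MixedAlg R k n) (α : SigModule R k n r) : SigModule R k n r :=
  Finsupp.sum f.coeff fun m cm => Finsupp.sum α fun σ cσ => Finsupp.single (mulL m σ) (cm * cσ)

/-- The right action of `A` on the bimodule `Σ`. -/
noncomputable def actR (α : SigModule R k n r) (f : MixedAlg R k n) : SigModule R k n r :=
  Finsupp.sum f.coeff fun m cm => Finsupp.sum α fun σ cσ => Finsupp.single (mulR σ m) (cσ * cm)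

/-- The two-sided multiple `t·α·b` of `α ∈ Σ` by the term `t = c·m` on the left
and the word `b` on the right. -/
noncomputable def scaleLR (m : MMon k n) (c : R) (α : SigModule R k n r)
    (b : FreeMonoid (Fin n)) : SigModule R k n r :=
  Finsupp.sum α fun σ cσ => Finsupp.single (mulLR m σ b) (c * cσ)

/-- The `A`-bimodule homomorphism `Σ → A`, `α ↦ ᾱ`, sending `ε_i` to `f_i`
(where `F i = f_i` are the generators). -/
noncomputable def barMap (F : Fin r → MixedAlg R k n) (α : SigModule R k n r) :
    MixedAlg R k n :=
  Finsupp.sum α fun σ cσ =>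
    trm ⟨σ.u, σ.a⟩ cσ * F σ.i * wrd σ.b

/-- The basis vector `ε_i` of `Σ`. -/
noncomputable def epsMod (i : Fin r) : SigModule R k n r :=
  Finsupp.single ⟨0, 1, i, 1⟩ 1

/-- The labeled module `I^{[Σ]}`: pairs `f^{[α]}` with `ᾱ = f`. -/
def Labeled (F : Fin r → MixedAlg R k n) (p : MixedAlg R k n × SigModule R k n r) : Prop :=
  barMap F p.2 = p.1

/-- A syzygy of `I^{[Σ]}`: an element `α ∈ Σ` with `ᾱ = 0`. -/
def IsSyzygy (F : Fin r → MixedAlg R k n) (γ : SigModule R k n r) : Prop :=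
  barMap F γ = 0

section Orders

variable [LinearOrder (MMon k n)] [LinearOrder (ModMon k n r)]

/-- The leading monomial of `f ∈ A` (with `LM 0 = ⊥`). -/
noncomputable def LMb (f : MixedAlg R k n) : WithBot (MMon k n) := f.coeff.support.max

/-- The leading monomial of `f ∈ A` (defaulting to `1` for `f = 0`). -/
noncomputable def LMd (f : MixedAlg R k n) : MMon k n := (f.coeff.support.max).unbotD 1

/-- The leading coefficient of `f ∈ A` (`0` for `f = 0`). -/
noncomputable def LC (f : MixedAlg R k n) : R := f.coeff (LMd f)

/-- The leading term of `f ∈ A`, as an element of `A` (`0` for `f = 0`). -/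
noncomputable def LTerm (f : MixedAlg R k n) : MixedAlg R k n := trm (LMd f) (LC f)

/-- The signature monomial of `α ∈ Σ` (with `⊥` for `α = 0`): the `⪯`-largest
monomial of the support of `α`. -/
noncomputable def sigb (α : SigModule R k n r) : WithBot (ModMon k n r) := α.support.max

variable [NeZero r]

/-- The signature monomial of `α ∈ Σ`, defaulting for `α = 0`. -/
noncomputable def sigMd (α : SigModule R k n r) : ModMon k n r :=
  (α.support.max).unbotD default

/-- The coefficient of the signature of `α`. -/
noncomputable def sigC (α : SigModule R k n r) : R := α (sigMd α)

/-- The signature `sig(α)` of `α ∈ Σ`, as a term, i.e. a single-term element of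
`Σ` (`0` for `α = 0`).  Equality `sig α = sig β` of signatures as *terms* is
`sigT α = sigT β`; the relation `sig α ≃ sig β` is `sigb α = sigb β`; the
relation `sig α ≺ sig β` is `sigb α < sigb β`. -/
noncomputable def sigT (α : SigModule R k n r) : SigModule R k n r :=
  Finsupp.single (sigMd α) (sigC α)

end Orders

/-- The compatibility requirements on the chosen monomial ordering on `M(A)`
and module ordering on `M(Σ)`: both are compatible with multiplication,
both are well-orderings, and they are compatible with each other. -/
structure IsOrderSetting (k n r : ℕ) [LinearOrder (MMon k n)]
    [LinearOrder (ModMon k n r)] : Prop where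
  mon_wf : WellFounded ((· < ·) : MMon k n → MMon k n → Prop)
  mod_wf : WellFounded ((· < ·) : ModMon k n r → ModMon k n r → Prop)
  mon_mul : ∀ a b m m' : MMon k n, m ≤ m' → a * m * b ≤ a * m' * b
  mod_mul : ∀ (m : MMon k n) (b : FreeMonoid (Fin n)) (σ τ : ModMon k n r),
      σ ≤ τ → mulLR m σ b ≤ mulLR m τ b
  compat₁ : ∀ (u v : Fin k →₀ ℕ) (a b : FreeMonoid (Fin n)) (i : Fin r),
      (⟨u, a⟩ : MMon k n) < ⟨v, b⟩ ↔ (⟨u, a, i, 1⟩ : ModMon k n r) < ⟨v, b, i, 1⟩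
  compat₂ : ∀ (u v : Fin k →₀ ℕ) (a b : FreeMonoid (Fin n)) (i : Fin r),
      (⟨u, a⟩ : MMon k n) < ⟨v, b⟩ ↔ (⟨u, 1, i, a⟩ : ModMon k n r) < ⟨v, 1, i, b⟩

end Defs

/-! ### Ambiguities -/

/-- `WordAmb a b c d p q` says that `(a ⊗ b, c ⊗ d, p, q)` is an ambiguity
(overlap, inclusion or external) of the words `p` and `q`. -/
inductive WordAmb {n : ℕ} :
    FreeMonoid (Fin n) → FreeMonoid (Fin n) → FreeMonoid (Fin n) → FreeMonoid (Fin n) →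
    FreeMonoid (Fin n) → FreeMonoid (Fin n) → Prop
  | overlap₁ (a b p q : FreeMonoid (Fin n)) (h : a * p = q * b)
      (ha : a ≠ 1) (hb : b ≠ 1) (hla : a.length < q.length) (hlb : b.length < p.length) :
      WordAmb a 1 1 b p q
  | overlap₂ (a b p q : FreeMonoid (Fin n)) (h : p * a = b * q)
      (ha : a ≠ 1) (hb : b ≠ 1) (hla : a.length < q.length) (hlb : b.length < p.length) :
      WordAmb 1 a b 1 p q
  | inclusion₁ (a b p q : FreeMonoid (Fin n)) (h : p = a * q * b) :
      WordAmb 1 1 a b p q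
  | inclusion₂ (a b p q : FreeMonoid (Fin n)) (h : a * p * b = q) :
      WordAmb a b 1 1 p q
  | external₁ (m p q : FreeMonoid (Fin n)) :
      WordAmb 1 (m * q) (p * m) 1 p q
  | external₂ (m p q : FreeMonoid (Fin n)) :
      WordAmb (q * m) 1 1 (m * p) p q

section Amb

variable {R : Type} [CommRing R] {k n r : ℕ}
variable [LinearOrder (MMon k n)] [LinearOrder (ModMon k n r)]

/-- `IsAmb f g m₁ n₁ m₂ n₂` says that `(m₁ ⊗ n₁, m₂ ⊗ n₂)` is an ambiguity of the
(nonzero) polynomials `f` and `g`: an ambiguity of the word parts of their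
leading monomials, with left cofactors completed by `lcm(u,v)/u` resp.
`lcm(u,v)/v` on the commutative parts. -/
def IsAmb (f g : MixedAlg R k n) (m₁ : MMon k n) (n₁ : FreeMonoid (Fin n))
    (m₂ : MMon k n) (n₂ : FreeMonoid (Fin n)) : Prop :=
  ∃ a b c d : FreeMonoid (Fin n),
    WordAmb a b c d (LMd f).w (LMd g).w ∧
    m₁ = ⟨((LMd f).c ⊔ (LMd g).c) - (LMd f).c, a⟩ ∧ n₁ = b ∧
    m₂ = ⟨((LMd f).c ⊔ (LMd g).c) - (LMd g).c, c⟩ ∧ n₂ = d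

/-- The leading monomial `LM(a) = LM(m₁ f n₁) = LM(m₂ g n₂)` of an ambiguity. -/
noncomputable def ambLM (f : MixedAlg R k n) (m₁ : MMon k n) (n₁ : FreeMonoid (Fin n)) :
    MMon k n :=
  m₁ * LMd f * ⟨0, n₁⟩

variable [IsDomain R] [GCDMonoid R]

/-- The cofactor `lcmlc(f,g)/LC(f)`. -/
noncomputable def cofL (f g : MixedAlg R k n) : R :=
  Classical.choose (dvd_lcm_left (LC f) (LC g))

/-- The cofactor `lcmlc(f,g)/LC(g)`. -/
noncomputable def cofR (f g : MixedAlg R k n) : R :=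
  Classical.choose (dvd_lcm_right (LC f) (LC g))

variable [NeZero r]

/-- The signature `SIG(a) = max(sig(c_f m₁ α n₁), −sig(c_g m₂ β n₂))` (first in
case of tie) of an ambiguity `a = (m₁ ⊗ n₁, m₂ ⊗ n₂)` of `f^{[α]]`, `g^{[β]}`,
as a term (single-term element) of `Σ`. -/
noncomputable def ambSIG (f g : MixedAlg R k n) (α β : SigModule R k n r)
    (m₁ : MMon k n) (n₁ : FreeMonoid (Fin n)) (m₂ : MMon k n) (n₂ : FreeMonoid (Fin n)) :
    SigModule R k n r :=
  if sigb (scaleLR m₂ (cofR f g) β n₂) ≤ sigb (scaleLR m₁ (cofL f g) α n₁) then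
    sigT (scaleLR m₁ (cofL f g) α n₁)
  else
    - sigT (scaleLR m₂ (cofR f g) β n₂)

/-- An ambiguity is regular if `sig(m₁ α n₁) ≄ sig(m₂ β n₂)`. -/
def RegAmb (α β : SigModule R k n r) (m₁ : MMon k n) (n₁ : FreeMonoid (Fin n))
    (m₂ : MMon k n) (n₂ : FreeMonoid (Fin n)) : Prop :=
  sigb (scaleLR m₁ (1 : R) α n₁) ≠ sigb (scaleLR m₂ (1 : R) β n₂)

/-- An ambiguity is singular if `sig(c_f m₁ α n₁) = sig(c_g m₂ β n₂)`. -/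
def SingAmb (f g : MixedAlg R k n) (α β : SigModule R k n r) (m₁ : MMon k n)
    (n₁ : FreeMonoid (Fin n)) (m₂ : MMon k n) (n₂ : FreeMonoid (Fin n)) : Prop :=
  sigT (scaleLR m₁ (cofL f g) α n₁) = sigT (scaleLR m₂ (cofR f g) β n₂)

/-- The polynomial part of the S-polynomial of an ambiguity. -/
noncomputable def SPolP (f g : MixedAlg R k n) (m₁ : MMon k n) (n₁ : FreeMonoid (Fin n))
    (m₂ : MMon k n) (n₂ : FreeMonoid (Fin n)) : MixedAlg R k n :=
  trm m₁ (cofL f g) * f * wrd n₁ - trm m₂ (cofR f g) * g * wrd n₂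

/-- The module part of the S-polynomial of an ambiguity. -/
noncomputable def SPolM (f g : MixedAlg R k n) (α β : SigModule R k n r) (m₁ : MMon k n)
    (n₁ : FreeMonoid (Fin n)) (m₂ : MMon k n) (n₂ : FreeMonoid (Fin n)) :
    SigModule R k n r :=
  scaleLR m₁ (cofL f g) α n₁ - scaleLR m₂ (cofR f g) β n₂

/-- The polynomial part of the G-polynomial of an ambiguity, w.r.t. Bézout
coefficients `c`, `d`. -/
noncomputable def GPolP (c d : R) (f g : MixedAlg R k n) (m₁ : MMon k n)
    (n₁ : FreeMonoid (Fin n)) (m₂ : MMon k n) (n₂ : FreeMonoid (Fin n)) : MixedAlg R k n :=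
  trm m₁ c * f * wrd n₁ + trm m₂ d * g * wrd n₂

/-- The module part of the G-polynomial of an ambiguity, w.r.t. Bézout
coefficients `c`, `d`. -/
noncomputable def GPolM (c d : R) (α β : SigModule R k n r) (m₁ : MMon k n)
    (n₁ : FreeMonoid (Fin n)) (m₂ : MMon k n) (n₂ : FreeMonoid (Fin n)) :
    SigModule R k n r :=
  scaleLR m₁ c α n₁ + scaleLR m₂ d β n₂

/-- `BezoutFor c d f g`: `c, d` are Bézout coefficients for `LC f`, `LC g`. -/
def BezoutFor (c d : R) (f g : MixedAlg R k n) : Prop :=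
  c * LC f + d * LC g = gcd (LC f) (LC g)

end Amb

/-! ### Reductions, bases, cover -/

section Red

variable {R : Type} [CommRing R] {k n r : ℕ}
variable [LinearOrder (MMon k n)] [LinearOrder (ModMon k n r)]

/-- `f^{[α]}` is (top) sig-reducible by `G`: there are `g^{[β]} ∈ G`, a term
`t = c·m` and a word `b` with `LT(t g b) = LT(f) > LT(f - t g b)` and
`sig(t β b) ⪯ sig(α)`. -/
def SigReducible (G : Set (MixedAlg R k n × SigModule R k n r))
    (f : MixedAlg R k n) (α : SigModule R k n r) : Prop :=
  ∃ g β, (g, β) ∈ G ∧ ∃ (m : MMon k n) (c : R) (b : FreeMonoid (Fin n)), c ≠ 0 ∧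
    LTerm (trm m c * g * wrd b) = LTerm f ∧
    LMb (f - trm m c * g * wrd b) < LMb f ∧
    sigb (scaleLR m c β b) ≤ sigb α

/-- `f^{[α]}` is regular sig-reducible by `G`. -/
def RegSigReducible (G : Set (MixedAlg R k n × SigModule R k n r))
    (f : MixedAlg R k n) (α : SigModule R k n r) : Prop :=
  ∃ g β, (g, β) ∈ G ∧ ∃ (m : MMon k n) (c : R) (b : FreeMonoid (Fin n)), c ≠ 0 ∧
    LTerm (trm m c * g * wrd b) = LTerm f ∧
    LMb (f - trm m c * g * wrd b) < LMb f ∧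
    sigb (scaleLR m c β b) < sigb α

/-- `f^{[α]}` is super reducible by `G`: there are `g^{[β]} ∈ G`, a term `t` and
a word `b` with `sig(α) = sig(t β b)` (as terms) and `LM(f) = LM(t g b)`. -/
def SuperReducible [NeZero r] (G : Set (MixedAlg R k n × SigModule R k n r))
    (f : MixedAlg R k n) (α : SigModule R k n r) : Prop :=
  ∃ g β, (g, β) ∈ G ∧ ∃ (m : MMon k n) (c : R) (b : FreeMonoid (Fin n)), c ≠ 0 ∧
    sigT α = sigT (scaleLR m c β b) ∧
    LMb f = LMb (trm m c * g * wrd b)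

/-- `α ∈ Σ` is (top) reducible by the set `H ⊆ Σ`: `sig(α) = sig(t γ b)` for
some `γ ∈ H`, term `t` and word `b`. -/
def ModReducible [NeZero r] (H : Set (SigModule R k n r)) (α : SigModule R k n r) : Prop :=
  ∃ γ ∈ H, ∃ (m : MMon k n) (c : R) (b : FreeMonoid (Fin n)), c ≠ 0 ∧
    sigT α = sigT (scaleLR m c γ b)

/-- `G` is a (strong) signature Gröbner basis of `I^{[Σ]}`. -/
def IsSigGB (F : Fin r → MixedAlg R k n) (G : Set (MixedAlg R k n × SigModule R k n r)) :
    Prop :=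
  ∀ f α, barMap F α = f → f ≠ 0 → SigReducible G f α

/-- `G` is a signature Gröbner basis of `I^{[Σ]}` up to (module monomial)
signature `σ`. -/
def IsSigGBUpTo (F : Fin r → MixedAlg R k n)
    (G : Set (MixedAlg R k n × SigModule R k n r)) (σ : WithBot (ModMon k n r)) : Prop :=
  ∀ f α, barMap F α = f → f ≠ 0 → sigb α < σ → SigReducible G f α

/-- `H` is a syzygy basis of `I^{[Σ]}`. -/
def IsSyzBasis [NeZero r] (F : Fin r → MixedAlg R k n) (H : Set (SigModule R k n r)) :
    Prop :=
  ∀ γ, IsSyzygy F γ → γ ≠ 0 → ModReducible H γ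

variable [IsDomain R] [GCDMonoid R] [NeZero r]

/-- `G` is complete: the G-polynomials (w.r.t. non-singular Bézout coefficients)
of all ambiguities of `G` are sig-reducible by `G`. -/
def CompleteSet (G : Set (MixedAlg R k n × SigModule R k n r)) : Prop :=
  ∀ g₁ β₁ g₂ β₂, (g₁, β₁) ∈ G → (g₂, β₂) ∈ G →
    ∀ m₁ n₁ m₂ n₂, IsAmb g₁ g₂ m₁ n₁ m₂ n₂ →
      ∀ c d, BezoutFor c d g₁ g₂ →
        sigb (GPolM c d β₁ β₂ m₁ n₁ m₂ n₂) = sigb (ambSIG g₁ g₂ β₁ β₂ m₁ n₁ m₂ n₂) →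
        SigReducible G (GPolP c d g₁ g₂ m₁ n₁ m₂ n₂) (GPolM c d β₁ β₂ m₁ n₁ m₂ n₂)

/-- `MonLcm σ₁ σ₂ τ`: the least common multiple `lcm(σ₁,σ₂)` of the module
monomials `σ₁ = u₁a₁ε_jb₁`, `σ₂ = u₂a₂ε_jb₂` is defined and equals `τ`. -/
def MonLcm (σ₁ σ₂ τ : ModMon k n r) : Prop :=
  σ₁.i = σ₂.i ∧ τ.i = σ₁.i ∧ τ.u = σ₁.u ⊔ σ₂.u ∧
  ((τ.a = σ₁.a ∧ ∃ s, σ₁.a = s * σ₂.a) ∨ (τ.a = σ₂.a ∧ ∃ s, σ₂.a = s * σ₁.a)) ∧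
  ((τ.b = σ₁.b ∧ ∃ s, σ₁.b = σ₂.b * s) ∨ (τ.b = σ₂.b ∧ ∃ s, σ₂.b = σ₁.b * s))

/-- `H` is sig-complete: all sig-Combinations of elements of `H` are reducible
by `H`. -/
def SigCompleteSet (H : Set (SigModule R k n r)) : Prop :=
  ∀ γ₁ ∈ H, ∀ γ₂ ∈ H, ∀ τ, MonLcm (sigMd γ₁) (sigMd γ₂) τ →
    ∀ (m₁ : MMon k n) (b₁ : FreeMonoid (Fin n)) (m₂ : MMon k n) (b₂ : FreeMonoid (Fin n)),
      mulLR m₁ (sigMd γ₁) b₁ = τ → mulLR m₂ (sigMd γ₂) b₂ = τ →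
      ∀ c d : R, c * sigC γ₁ + d * sigC γ₂ = gcd (sigC γ₁) (sigC γ₂) →
        ModReducible H (scaleLR m₁ c γ₁ b₁ + scaleLR m₂ d γ₂ b₂)

/-- The ambiguity `a` (of `g₁^{[β₁]}`, `g₂^{[β₂]}`), with signature `SIG(a)` and
leading monomial `LM(a)`, is covered by `(G, H)`: there are `g^{[β]} ∈ G`,
`γ ∈ H`, terms `t, t'` (possibly `0`) and words `b, b'` with
`SIG(a) = sig(t β b) + sig(t' γ b')` and `LM(t g b) < LM(a)`. -/
def CoveredBy (G : Set (MixedAlg R k n × SigModule R k n r))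
    (H : Set (SigModule R k n r)) (Sig : SigModule R k n r) (Lm : MMon k n) : Prop :=
  ∃ g β, (g, β) ∈ G ∧ ∃ γ ∈ H,
    ∃ (m : MMon k n) (c : R) (b : FreeMonoid (Fin n))
      (m' : MMon k n) (c' : R) (b' : FreeMonoid (Fin n)),
      Sig = sigT (scaleLR m c β b) + sigT (scaleLR m' c' γ b') ∧
      LMb (trm m c * g * wrd b) < (Lm : WithBot (MMon k n))

end Red


/-! ### Auxiliary lemmas for the F5 criterion -/

section AuxF5

variable {R : Type} [CommRing R] {k n r : ℕ}

@[simp] lemma trm_zero (m : MMon k n) : trm m (0 : R) = 0 := MonoidAlgebra.single_zero m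

lemma barMap_zero (F : Fin r → MixedAlg R k n) : barMap F 0 = 0 :=
  Finsupp.sum_zero_index

lemma barMap_single (F : Fin r → MixedAlg R k n) (σ : ModMon k n r) (c : R) :
    barMap F (Finsupp.single σ c) = trm ⟨σ.u, σ.a⟩ c * F σ.i * wrd σ.b := by
  unfold barMap
  rw [Finsupp.sum_single_index]
  simp

lemma barMap_add (F : Fin r → MixedAlg R k n) (α β : SigModule R k n r) :
    barMap F (α + β) = barMap F α + barMap F β := by
  classical
  unfold barMap
  rw [Finsupp.sum_add_index]
  · intro a _; simp
  · intro a _ b₁ b₂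
    simp [trm, Finsupp.single_add, add_mul]

/-- `barMap` bundled as an additive homomorphism. -/
noncomputable def barHom (F : Fin r → MixedAlg R k n) :
    SigModule R k n r →+ MixedAlg R k n where
  toFun := barMap F
  map_zero' := barMap_zero F
  map_add' := barMap_add F

lemma single_central (u : Fin k →₀ ℕ) (c : R) (f : MixedAlg R k n) :
    MonoidAlgebra.single (⟨u, 1⟩ : MMon k n) c * f
      = f * MonoidAlgebra.single (⟨u, 1⟩ : MMon k n) c := by
  induction f using MonoidAlgebra.induction_linear with
  | zero => simp
  | add f g hf hg => rw [mul_add, add_mul, hf, hg]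
  | single a b =>
    show MonoidAlgebra.single _ c * MonoidAlgebra.single a b
        = MonoidAlgebra.single a b * MonoidAlgebra.single _ c
    rw [MonoidAlgebra.single_mul_single, MonoidAlgebra.single_mul_single, mul_comm c b]
    congr 1
    ext : 1 <;> simp [add_comm]

lemma barMap_expand (F : Fin r → MixedAlg R k n) (α : SigModule R k n r) :
    barMap F α = ∑ σ ∈ α.support, trm ⟨σ.u, σ.a⟩ (α σ) * F σ.i * wrd σ.b := rfl

lemma barMap_actL (F : Fin r → MixedAlg R k n) (f : MixedAlg R k n)
    (α : SigModule R k n r) : barMap F (actL f α) = f * barMap F α := by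
  have h : ∀ (X : Type) (s : Finset X) (g : X → SigModule R k n r),
      barMap F (∑ x ∈ s, g x) = ∑ x ∈ s, barMap F (g x) :=
    fun X s g => map_sum (barHom F) g s
  have hrhs : f * barMap F α
      = ∑ mm ∈ f.coeff.support, MonoidAlgebra.single mm (f.coeff mm) * barMap F α := by
    rw [← Finset.sum_mul]
    congr 1
    exact (MonoidAlgebra.sum_coeff_single f).symm
  unfold actL Finsupp.sum
  rw [h, Finset.sum_congr rfl (fun mm _ => h _ _ _), hrhs]
  refine Finset.sum_congr rfl fun mm _ => ?_
  rw [barMap_expand, Finset.mul_sum]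
  refine Finset.sum_congr rfl fun σ _ => ?_
  rw [barMap_single]
  show trm ⟨mm.c + σ.u, mm.w * σ.a⟩ (f.coeff mm * α σ) * F σ.i * wrd σ.b = _
  rw [← mul_assoc, ← mul_assoc]
  congr 2
  show MonoidAlgebra.single _ _ = MonoidAlgebra.single mm (f.coeff mm) * MonoidAlgebra.single _ _
  rw [MonoidAlgebra.single_mul_single]
  congr 1
  all_goals ext : 1 <;> simp

lemma barMap_actR (F : Fin r → MixedAlg R k n) (f : MixedAlg R k n)
    (α : SigModule R k n r) : barMap F (actR α f) = barMap F α * f := by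
  have h : ∀ (X : Type) (s : Finset X) (g : X → SigModule R k n r),
      barMap F (∑ x ∈ s, g x) = ∑ x ∈ s, barMap F (g x) :=
    fun X s g => map_sum (barHom F) g s
  have hrhs : barMap F α * f
      = ∑ mm ∈ f.coeff.support, barMap F α * MonoidAlgebra.single mm (f.coeff mm) := by
    rw [← Finset.mul_sum]
    congr 1
    exact (MonoidAlgebra.sum_coeff_single f).symm
  unfold actR Finsupp.sum
  rw [h, Finset.sum_congr rfl (fun mm _ => h _ _ _), hrhs]
  refine Finset.sum_congr rfl fun mm _ => ?_
  rw [barMap_expand, Finset.sum_mul]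
  refine Finset.sum_congr rfl fun σ _ => ?_
  rw [barMap_single]
  show trm ⟨σ.u + mm.c, σ.a⟩ (α σ * f.coeff mm) * F σ.i * wrd (σ.b * mm.w) = _
  simp only [trm, wrd]
  have e1 : MonoidAlgebra.single (⟨σ.u + mm.c, σ.a⟩ : MMon k n) (α σ * f.coeff mm)
      = MonoidAlgebra.single (⟨σ.u, σ.a⟩ : MMon k n) (α σ)
        * MonoidAlgebra.single (⟨mm.c, 1⟩ : MMon k n) (f.coeff mm) := by
    rw [MonoidAlgebra.single_mul_single]
    congr 1
    ext : 1 <;> simp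
  have e2 : MonoidAlgebra.single (⟨mm.c, 1⟩ : MMon k n) (f.coeff mm)
        * MonoidAlgebra.single (⟨0, σ.b * mm.w⟩ : MMon k n) (1 : R)
      = MonoidAlgebra.single (⟨mm.c, σ.b * mm.w⟩ : MMon k n) (f.coeff mm) := by
    rw [MonoidAlgebra.single_mul_single, mul_one]
    congr 1
    ext : 1 <;> simp
  have e3 : MonoidAlgebra.single (⟨0, σ.b⟩ : MMon k n) (1 : R)
        * MonoidAlgebra.single mm (f.coeff mm)
      = MonoidAlgebra.single (⟨mm.c, σ.b * mm.w⟩ : MMon k n) (f.coeff mm) := by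
    rw [MonoidAlgebra.single_mul_single, one_mul]
    congr 1
    ext : 1 <;> simp
  calc MonoidAlgebra.single (⟨σ.u + mm.c, σ.a⟩ : MMon k n) (α σ * f.coeff mm) * F σ.i
        * MonoidAlgebra.single (⟨0, σ.b * mm.w⟩ : MMon k n) (1 : R)
      = MonoidAlgebra.single (⟨σ.u, σ.a⟩ : MMon k n) (α σ)
          * (MonoidAlgebra.single (⟨mm.c, 1⟩ : MMon k n) (f.coeff mm) * F σ.i)
          * MonoidAlgebra.single (⟨0, σ.b * mm.w⟩ : MMon k n) (1 : R) := by
        rw [e1, mul_assoc (MonoidAlgebra.single _ _)]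
    _ = MonoidAlgebra.single (⟨σ.u, σ.a⟩ : MMon k n) (α σ)
          * (F σ.i * MonoidAlgebra.single (⟨mm.c, 1⟩ : MMon k n) (f.coeff mm))
          * MonoidAlgebra.single (⟨0, σ.b * mm.w⟩ : MMon k n) (1 : R) := by
        rw [single_central]
    _ = MonoidAlgebra.single (⟨σ.u, σ.a⟩ : MMon k n) (α σ) * F σ.i
          * (MonoidAlgebra.single (⟨mm.c, 1⟩ : MMon k n) (f.coeff mm)
             * MonoidAlgebra.single (⟨0, σ.b * mm.w⟩ : MMon k n) (1 : R)) := by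
        rw [← mul_assoc, mul_assoc _ _ (MonoidAlgebra.single _ _)]
    _ = MonoidAlgebra.single (⟨σ.u, σ.a⟩ : MMon k n) (α σ) * F σ.i
          * (MonoidAlgebra.single (⟨0, σ.b⟩ : MMon k n) (1 : R)
             * MonoidAlgebra.single mm (f.coeff mm)) := by rw [e2, e3]
    _ = MonoidAlgebra.single (⟨σ.u, σ.a⟩ : MMon k n) (α σ) * F σ.i
          * MonoidAlgebra.single (⟨0, σ.b⟩ : MMon k n) (1 : R)
          * MonoidAlgebra.single mm (f.coeff mm) := by rw [← mul_assoc]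

section AuxOrd

variable [LinearOrder (MMon k n)] [LinearOrder (ModMon k n r)] [NeZero r]

lemma mulLR_inj (m : MMon k n) (b : FreeMonoid (Fin n)) :
    Function.Injective (fun σ : ModMon k n r => mulLR m σ b) := by
  intro σ τ h
  simp only [mulLR, ModMon.mk.injEq] at h
  obtain ⟨h1, h2, h3, h4⟩ := h
  ext : 1
  · exact add_left_cancel h1
  · exact mul_left_cancel h2
  · exact h3
  · exact mul_right_cancel h4

lemma sigMd_mem_support (γ : SigModule R k n r) (hγ : γ ≠ 0) :
    sigMd γ ∈ γ.support ∧ ∀ σ ∈ γ.support, σ ≤ sigMd γ := by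
  have hne : γ.support.Nonempty := Finsupp.support_nonempty_iff.2 hγ
  have hmax : sigMd γ = γ.support.max' hne := by
    unfold sigMd
    rw [← Finset.coe_max' hne]
    rfl
  constructor
  · rw [hmax]; exact Finset.max'_mem _ _
  · intro σ hσ; rw [hmax]; exact Finset.le_max' _ _ hσ

lemma sigb_eq_coe (γ : SigModule R k n r) (hγ : γ ≠ 0) :
    sigb γ = ↑(sigMd γ) := by
  have hne : γ.support.Nonempty := Finsupp.support_nonempty_iff.2 hγ
  unfold sigb
  rw [← Finset.coe_max' hne]
  unfold sigMd
  rw [← Finset.coe_max' hne]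
  rfl

lemma sigC_ne_zero (γ : SigModule R k n r) (hγ : γ ≠ 0) : sigC γ ≠ 0 :=
  Finsupp.mem_support_iff.1 (sigMd_mem_support γ hγ).1

@[simp] lemma sigT_zero : sigT (0 : SigModule R k n r) = 0 := by
  simp [sigT, sigC]

lemma sigMd_single (σ : ModMon k n r) (s : R) (hs : s ≠ 0) :
    sigMd (Finsupp.single σ s) = σ := by
  unfold sigMd
  rw [Finsupp.support_single_ne_zero _ hs]
  rfl

lemma sigC_single (σ : ModMon k n r) (s : R) (hs : s ≠ 0) :
    sigC (Finsupp.single σ s) = s := by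
  unfold sigC
  rw [sigMd_single σ s hs, Finsupp.single_eq_same]

lemma sigT_single (σ : ModMon k n r) (s : R) :
    sigT (Finsupp.single σ s) = Finsupp.single σ s := by
  by_cases hs : s = 0
  · simp [hs]
  · unfold sigT
    rw [sigMd_single σ s hs, sigC_single σ s hs]

lemma sigT_neg (γ : SigModule R k n r) : sigT (-γ) = - sigT γ := by
  have hs : (-γ).support = γ.support := Finsupp.support_neg γ
  have hM : sigMd (-γ) = sigMd γ := by unfold sigMd; rw [hs]
  unfold sigT sigC
  rw [hM, Finsupp.neg_apply, Finsupp.single_neg]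

lemma scaleLR_zero (m : MMon k n) (b : FreeMonoid (Fin n)) (γ : SigModule R k n r) :
    scaleLR m (0 : R) γ b = 0 := by
  unfold scaleLR
  simp

lemma scaleLR_eq_mapDomain (m : MMon k n) (c : R) (γ : SigModule R k n r)
    (b : FreeMonoid (Fin n)) :
    scaleLR m c γ b = Finsupp.mapDomain (fun σ => mulLR m σ b) (c • γ) := by
  unfold scaleLR Finsupp.mapDomain
  rw [Finsupp.sum_smul_index (fun i => Finsupp.single_zero _)]

lemma sigT_scaleLR [IsDomain R] (hord : IsOrderSetting k n r)
    (m : MMon k n) (c : R) (b : FreeMonoid (Fin n)) (γ : SigModule R k n r)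
    (hc : c ≠ 0) (hγ : γ ≠ 0) :
    sigT (scaleLR m c γ b) = Finsupp.single (mulLR m (sigMd γ) b) (c * sigC γ) := by
  classical
  have hinj := mulLR_inj (k := k) (n := n) (r := r) m b
  have hsupp : (scaleLR m c γ b).support = γ.support.image (fun σ => mulLR m σ b) := by
    rw [scaleLR_eq_mapDomain, Finsupp.mapDomain_support_of_injective hinj,
      Finsupp.support_smul_eq hc]
  obtain ⟨hMmem, hMle⟩ := sigMd_mem_support γ hγ
  have hmax : (scaleLR m c γ b).support.max = ↑(mulLR m (sigMd γ) b) := by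
    apply le_antisymm
    · apply Finset.max_le
      intro x hx
      rw [hsupp] at hx
      obtain ⟨σ, hσ, rfl⟩ := Finset.mem_image.1 hx
      exact WithBot.coe_le_coe.2 (hord.mod_mul m b σ (sigMd γ) (hMle σ hσ))
    · apply Finset.le_max
      rw [hsupp]
      exact Finset.mem_image_of_mem _ hMmem
  have hM : sigMd (scaleLR m c γ b) = mulLR m (sigMd γ) b := by
    unfold sigMd
    rw [hmax]
    rfl
  have hC : sigC (scaleLR m c γ b) = c * sigC γ := by
    unfold sigC
    rw [hM, scaleLR_eq_mapDomain, Finsupp.mapDomain_apply hinj]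
    rfl
  unfold sigT
  rw [hM, hC]

lemma sigT_sub_lt (α β : SigModule R k n r) (h : sigb β < sigb α) :
    sigT (α - β) = sigT α := by
  have hα : α ≠ 0 := by
    rintro rfl
    rw [show sigb (0 : SigModule R k n r) = ⊥ from by simp [sigb]] at h
    exact not_lt_bot h
  obtain ⟨hMmem, hMle⟩ := sigMd_mem_support α hα
  have hsig : sigb α = ↑(sigMd α) := sigb_eq_coe α hα
  have hβM : β (sigMd α) = 0 := by
    by_contra hne
    have : sigMd α ∈ β.support := Finsupp.mem_support_iff.2 hne
    have h1 : (↑(sigMd α) : WithBot (ModMon k n r)) ≤ sigb β := Finset.le_max this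
    rw [hsig] at h
    exact absurd (h1.trans_lt h) (lt_irrefl _)
  have hval : (α - β) (sigMd α) = α (sigMd α) := by
    rw [Finsupp.sub_apply, hβM, sub_zero]
  have hmem : sigMd α ∈ (α - β).support := by
    rw [Finsupp.mem_support_iff, hval]
    exact Finsupp.mem_support_iff.1 hMmem
  have hmax : (α - β).support.max = ↑(sigMd α) := by
    apply le_antisymm
    · apply Finset.max_le
      intro x hx
      rcases Finset.mem_union.1 (Finsupp.support_sub hx) with hx | hx
      · exact WithBot.coe_le_coe.2 (hMle x hx)
      · have h1 : (↑x : WithBot (ModMon k n r)) ≤ sigb β := Finset.le_max hx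
        rw [hsig] at h
        exact h1.trans h.le
    · exact Finset.le_max hmem
  have hM : sigMd (α - β) = sigMd α := by
    unfold sigMd
    rw [hmax]
    rfl
  unfold sigT sigC
  rw [hM, hval]

lemma sigT_sub (α β : SigModule R k n r) (h : sigb α ≠ sigb β) :
    sigT (α - β) = if sigb β ≤ sigb α then sigT α else - sigT β := by
  rcases lt_or_gt_of_ne h with hlt | hgt
  · rw [if_neg (not_le.2 hlt)]
    rw [show α - β = -(β - α) from (neg_sub β α).symm, sigT_neg, sigT_sub_lt β α hlt]
  · rw [if_pos hgt.le]
    exact sigT_sub_lt α β hgt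

end AuxOrd

end AuxF5
/-- Corollary 6.3: the F5 criterion.  Let `a` be a regular
ambiguity of elements of `G` and suppose there are `g₁^{[β₁]}, g₂^{[β₂]} ∈ G`
and a mixed monomial `m` with `sig(g₂ m β₁) ≄ sig(β₂ m g₁)` and `SIG(a)`
reducible by `max(sig(g₂ m β₁), −sig(β₂ m g₁))`.  Then `a` is covered by the
trivial syzygy `g₂ m β₁ − β₂ m g₁` (so `S-Pol(a)` can be discarded after
adding this trivial syzygy to `H`). -/
theorem f5_criterion
    {R : Type} [CommRing R] [IsDomain R] [IsPrincipalIdealRing R] [GCDMonoid R]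
    {k n r : ℕ} [NeZero r]
    [LinearOrder (MMon k n)] [LinearOrder (ModMon k n r)]
    (hord : IsOrderSetting k n r)
    (F : Fin r → MixedAlg R k n)
    (G : Set (MixedAlg R k n × SigModule R k n r))
    (H : Set (SigModule R k n r))
    (hGI : ∀ p ∈ G, Labeled F p)
    (hHsyz : ∀ γ ∈ H, IsSyzygy F γ)
    -- the regular ambiguity `a` of elements of `G`
    (gA gB : MixedAlg R k n) (βA βB : SigModule R k n r)
    (hgA : (gA, βA) ∈ G) (hgB : (gB, βB) ∈ G)
    (M₁ : MMon k n) (N₁ : FreeMonoid (Fin n)) (M₂ : MMon k n) (N₂ : FreeMonoid (Fin n))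
    (ha : IsAmb gA gB M₁ N₁ M₂ N₂) (hreg : RegAmb βA βB M₁ N₁ M₂ N₂)
    -- the elements producing the trivial syzygy
    (g₁ g₂ : MixedAlg R k n) (β₁ β₂ : SigModule R k n r)
    (hg₁ : (g₁, β₁) ∈ G) (hg₂ : (g₂, β₂) ∈ G)
    (m : MMon k n)
    (hne : sigb (actL (g₂ * trm m 1) β₁) ≠ sigb (actR β₂ (trm m 1 * g₁)))
    -- `SIG(a)` is reducible by `max(sig(g₂ m β₁), −sig(β₂ m g₁))`
    (hdvd : ∃ (m' : MMon k n) (c' : R) (b' : FreeMonoid (Fin n)), c' ≠ 0 ∧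
        ambSIG gA gB βA βB M₁ N₁ M₂ N₂ =
          sigT (scaleLR m' c'
            (if sigb (actR β₂ (trm m 1 * g₁)) ≤ sigb (actL (g₂ * trm m 1) β₁) then
              sigT (actL (g₂ * trm m 1) β₁)
            else
              - sigT (actR β₂ (trm m 1 * g₁))) b')) :
    IsSyzygy F (actL (g₂ * trm m 1) β₁ - actR β₂ (trm m 1 * g₁)) ∧
    CoveredBy G (insert (actL (g₂ * trm m 1) β₁ - actR β₂ (trm m 1 * g₁)) H)
      (ambSIG gA gB βA βB M₁ N₁ M₂ N₂) (ambLM gA M₁ N₁) := by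
  set P := actL (g₂ * trm m 1) β₁ with hP
  set Q := actR β₂ (trm m 1 * g₁) with hQ
  have hβ₁ : barMap F β₁ = g₁ := by
    have h := hGI _ hg₁
    unfold Labeled at h
    exact h
  have hβ₂ : barMap F β₂ = g₂ := by
    have h := hGI _ hg₂
    unfold Labeled at h
    exact h
  have hsyz : IsSyzygy F (P - Q) := by
    unfold IsSyzygy
    have hsub : barMap F (P - Q) = barMap F P - barMap F Q := map_sub (barHom F) P Q
    rw [hsub, hP, hQ, barMap_actL, barMap_actR, hβ₁, hβ₂, mul_assoc, sub_self]
  refine ⟨hsyz, ?_⟩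
  have hPQ : P - Q ≠ 0 := fun h0 => hne (by rw [sub_eq_zero.1 h0])
  obtain ⟨m', c', b', hc', hSIG⟩ := hdvd
  have hX : (if sigb Q ≤ sigb P then sigT P else - sigT Q) = sigT (P - Q) :=
    (sigT_sub P Q hne).symm
  have hs0 : sigC (P - Q) ≠ 0 := sigC_ne_zero _ hPQ
  have h1 : sigT (scaleLR m' c' (P - Q) b')
      = Finsupp.single (mulLR m' (sigMd (P - Q)) b') (c' * sigC (P - Q)) :=
    sigT_scaleLR hord m' c' b' _ hc' hPQ
  have h2 : sigT (scaleLR m' c' (sigT (P - Q)) b')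
      = Finsupp.single (mulLR m' (sigMd (P - Q)) b') (c' * sigC (P - Q)) := by
    rw [show sigT (P - Q) = Finsupp.single (sigMd (P - Q)) (sigC (P - Q)) from rfl]
    rw [sigT_scaleLR hord m' c' b' _ hc' (fun hz => hs0 (Finsupp.single_eq_zero.1 hz)),
      sigMd_single _ _ hs0, sigC_single _ _ hs0]
  refine ⟨gA, βA, hgA, P - Q, Set.mem_insert _ _, 1, 0, 1, m', c', b', ?_, ?_⟩
  · rw [scaleLR_zero, sigT_zero, zero_add, hSIG, hX, h2, h1]
  · show LMb (trm 1 (0 : R) * gA * wrd 1) < _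
    rw [trm_zero, zero_mul, zero_mul]
    show LMb (0 : MixedAlg R k n) < _
    have : LMb (0 : MixedAlg R k n) = ⊥ := by simp [LMb]
    rw [this]
    exact WithBot.bot_lt_coe _
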